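/- For every real number l ≥ 1, the improper integral ∫₁^∞ frac(t/l) / t² dt equals (1 - γ)/l + (ln l)/l, where frac denotes the fractional part and γ is the Euler–Mascheroni constant. -/

import Mathlib

open MeasureTheory Real

lemma aux_meas : Measurable (fun t : ℝ => Int.fract t / t ^ 2) :=
  measurable_fract.div (measurable_id.pow_const 2)

lemma aux_integrable {c : ℝ} (hc : 0 < c) :
    IntegrableOn (fun t : ℝ => Int.fract t / t ^ 2) (Set.Ioi c) := by
  apply Integrable.mono (integrableOn_Ioi_rpow_of_lt (by norm_num : (-2 : ℝ) < -1) hc)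
    aux_meas.aestronglyMeasurable.restrict
  rw [ae_restrict_iff' measurableSet_Ioi]
  filter_upwards with t ht
  have ht0 : 0 < t := hc.trans ht
  have h2 : t ^ (-2 : ℝ) = (t ^ 2)⁻¹ := by
    rw [show (-2 : ℝ) = -((2 : ℕ) : ℝ) by norm_num, rpow_neg ht0.le, rpow_natCast]
  rw [norm_of_nonneg (div_nonneg (Int.fract_nonneg t) (by positivity)),
    norm_of_nonneg (by positivity), h2, ← one_div]
  gcongr
  exact (Int.fract_lt_one t).le

lemma aux_union : Set.Ici (1 : ℝ) = ⋃ n : ℕ, Set.Ico ((n : ℝ) + 1) ((n : ℝ) + 2) := by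
  ext x
  simp only [Set.mem_Ici, Set.mem_iUnion, Set.mem_Ico]
  constructor
  · intro hx
    have h1 : 1 ≤ ⌊x⌋₊ := Nat.one_le_floor_iff x |>.mpr hx
    refine ⟨⌊x⌋₊ - 1, ?_, ?_⟩
    · rw [Nat.cast_sub h1]
      push_cast
      have := Nat.floor_le (by linarith : (0:ℝ) ≤ x)
      linarith
    · rw [Nat.cast_sub h1]
      push_cast
      have := Nat.lt_floor_add_one x
      linarith
  · rintro ⟨n, hn1, _⟩
    have : (0 : ℝ) ≤ n := Nat.cast_nonneg n
    linarith

lemma aux_term (n : ℕ) :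
    ∫ t in Set.Ico ((n : ℝ) + 1) ((n : ℝ) + 2), Int.fract t / t ^ 2 =
      ZetaAsymptotics.term (n + 1) 1 := by
  rw [ZetaAsymptotics.term,
    intervalIntegral.integral_of_le (by push_cast; linarith : ((n + 1 : ℕ) : ℝ) ≤ (n + 1 : ℕ) + 1),
    integral_Ioc_eq_integral_Ioo, integral_Ico_eq_integral_Ioo]
  have hs : Set.Ioo ((n : ℝ) + 1) ((n : ℝ) + 2) = Set.Ioo (((n + 1 : ℕ) : ℝ)) ((n + 1 : ℕ) + 1) := by
    congr 1 <;> push_cast <;> ring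
  rw [hs]
  refine setIntegral_congr_fun measurableSet_Ioo (fun t ht => ?_)
  have h1 : ((n + 1 : ℕ) : ℝ) < t := ht.1
  have h2 : t < ((n + 1 : ℕ) : ℝ) + 1 := ht.2
  have ht0 : (0 : ℝ) < t := lt_of_le_of_lt (by positivity) h1
  have hfr : Int.fract t = t - ((n + 1 : ℕ) : ℝ) := by
    rw [Int.fract_eq_iff]
    refine ⟨by linarith, by linarith, (n + 1 : ℤ), ?_⟩
    push_cast; ring
  have hp : t ^ ((1 : ℝ) + 1) = t ^ 2 := by
    rw [show (1 : ℝ) + 1 = ((2 : ℕ) : ℝ) by norm_num, rpow_natCast]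
  rw [hfr, hp]

lemma aux_key : ∫ t in Set.Ioi (1 : ℝ), Int.fract t / t ^ 2 =
    1 - Real.eulerMascheroniConstant := by
  rw [← integral_Ici_eq_integral_Ioi, aux_union]
  rw [integral_iUnion (fun n => measurableSet_Ico) ?_ ?_]
  · simp_rw [aux_term]
    exact ZetaAsymptotics.term_tsum_one.tsum_eq
  · intro m n hmn
    refine Set.Ico_disjoint_Ico.mpr ?_
    rcases lt_or_gt_of_ne hmn with h | h
    · have : (m : ℝ) + 1 ≤ n := by exact_mod_cast h
      calc min ((m : ℝ) + 2) ((n : ℝ) + 2) ≤ (m : ℝ) + 2 := min_le_left _ _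
        _ ≤ (n : ℝ) + 1 := by linarith
        _ ≤ max ((m : ℝ) + 1) ((n : ℝ) + 1) := le_max_right _ _
    · have : (n : ℝ) + 1 ≤ m := by exact_mod_cast h
      calc min ((m : ℝ) + 2) ((n : ℝ) + 2) ≤ (n : ℝ) + 2 := min_le_right _ _
        _ ≤ (m : ℝ) + 1 := by linarith
        _ ≤ max ((m : ℝ) + 1) ((n : ℝ) + 1) := le_max_left _ _
  · rw [← aux_union]
    exact (aux_integrable (by norm_num : (0:ℝ) < 1/2)).mono_set
      (fun x hx => lt_of_lt_of_le (by norm_num : (1/2:ℝ) < 1) hx)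

theorem stmt_0 (l : ℝ) (hl : 1 ≤ l) :
    ∫ t in Set.Ioi (1 : ℝ), Int.fract (t / l) / t ^ 2 =
      (1 - Real.eulerMascheroniConstant) / l + Real.log l / l := by
  have hl0 : 0 < l := lt_of_lt_of_le one_pos hl
  have hinv_pos : 0 < l⁻¹ := inv_pos.mpr hl0
  have hinv_le : l⁻¹ ≤ 1 := by
    rw [inv_le_one_iff₀]; right; exact hl
  have hstep : ∀ t : ℝ, Int.fract (t / l) / t ^ 2 =
      (l ^ 2)⁻¹ * ((fun u : ℝ => Int.fract u / u ^ 2) (l⁻¹ * t)) := by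
    intro t
    rcases eq_or_ne t 0 with rfl | ht
    · simp
    · simp only [div_eq_inv_mul]
      rw [mul_pow, inv_pow]
      field_simp
  calc ∫ t in Set.Ioi (1 : ℝ), Int.fract (t / l) / t ^ 2
      = ∫ t in Set.Ioi (1 : ℝ),
          (l ^ 2)⁻¹ * ((fun u : ℝ => Int.fract u / u ^ 2) (l⁻¹ * t)) := by
        exact setIntegral_congr_fun measurableSet_Ioi (fun t _ => hstep t)
    _ = (l ^ 2)⁻¹ * ∫ t in Set.Ioi (1 : ℝ),
          (fun u : ℝ => Int.fract u / u ^ 2) (l⁻¹ * t) := integral_const_mul _ _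
    _ = (l ^ 2)⁻¹ * ((l⁻¹)⁻¹ • ∫ u in Set.Ioi (l⁻¹ * 1), Int.fract u / u ^ 2) := by
        rw [integral_comp_mul_left_Ioi (fun u : ℝ => Int.fract u / u ^ 2) 1 hinv_pos]
    _ = l⁻¹ * ∫ u in Set.Ioi l⁻¹, Int.fract u / u ^ 2 := by
        rw [smul_eq_mul, inv_inv, mul_one]
        field_simp
    _ = l⁻¹ * ((∫ u in Set.Ioc l⁻¹ 1, Int.fract u / u ^ 2) +
          ∫ u in Set.Ioi (1 : ℝ), Int.fract u / u ^ 2) := by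
        rw [← setIntegral_union (Set.Ioc_disjoint_Ioi le_rfl) measurableSet_Ioi
          ((aux_integrable hinv_pos).mono_set Set.Ioc_subset_Ioi_self)
          (aux_integrable one_pos), Set.Ioc_union_Ioi_eq_Ioi hinv_le]
    _ = l⁻¹ * (Real.log l + (1 - Real.eulerMascheroniConstant)) := by
        rw [aux_key]
        congr 1
        rw [integral_Ioc_eq_integral_Ioo]
        have : ∫ u in Set.Ioo l⁻¹ 1, Int.fract u / u ^ 2 = ∫ u in Set.Ioo l⁻¹ 1, u⁻¹ := by
          refine setIntegral_congr_fun measurableSet_Ioo (fun u hu => ?_)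
          have hu0 : 0 < u := hinv_pos.trans hu.1
          rw [Int.fract_eq_self.mpr ⟨hu0.le, hu.2⟩, pow_two, div_mul_eq_div_div,
            div_self hu0.ne', one_div]
        rw [this, ← integral_Ioc_eq_integral_Ioo,
          ← intervalIntegral.integral_of_le hinv_le, integral_inv_of_pos hinv_pos one_pos,
          one_div, inv_inv]
    _ = (1 - Real.eulerMascheroniConstant) / l + Real.log l / l := by
        field_simp
        ring
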